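/- More generally, for odd ℓ, every antisymmetric polynomial P ∈ ℂ[z₁,…,z_N] that vanishes to order at least ℓ on each diagonal {z_i = z_j} (i ≠ j) is divisible by ∏_{1≤i<j≤N} (z_i − z_j)^ℓ, with symmetric quotient. -/

import Mathlib

open Finset MvPolynomial

private lemma primeXsubX {n : ℕ} {i j : Fin (n+1)} (hij : i ≠ j) :
    Prime (X i - X j : MvPolynomial (Fin (n+1)) ℂ) := by
  let e := (renameEquiv ℂ (finSuccEquiv' i)).trans (optionEquivLeft ℂ (Fin n))
  rw [← MulEquiv.prime_iff e.toRingEquiv.toMulEquiv]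
  obtain ⟨j', hj'⟩ : ∃ j', finSuccEquiv' i j = some j' := by
    cases h : finSuccEquiv' i j with
    | none =>
      exact absurd ((finSuccEquiv' i).injective (h.trans (finSuccEquiv'_at i).symm)) hij.symm
    | some j' => exact ⟨j', rfl⟩
  have he : e (X i - X j) = Polynomial.X - Polynomial.C (X j') := by
    simp [e, renameEquiv_apply, finSuccEquiv'_at, hj']
  rw [show e.toRingEquiv.toMulEquiv (X i - X j) = e (X i - X j) from rfl, he]
  exact Polynomial.prime_X_sub_C _

private lemma notdvdXsubX {N : ℕ} {i j k m : Fin N} (hij : i < j) (hkm : k < m)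
    (hne : (i, j) ≠ (k, m)) :
    ¬ (X i - X j : MvPolynomial (Fin N) ℂ) ∣ (X k - X m) := by
  rintro ⟨c, hc⟩
  obtain ⟨t, ht, hti, htj⟩ : ∃ t, (t = k ∨ t = m) ∧ t ≠ i ∧ t ≠ j := by
    by_cases hki : k = i
    · subst hki
      refine ⟨m, Or.inr rfl, ?_, ?_⟩
      · intro h; subst h; exact absurd hkm (lt_irrefl _)
      · intro h; exact hne (Prod.ext rfl h.symm)
    · by_cases hkj : k = j
      · subst hkj
        refine ⟨m, Or.inr rfl, ?_, ?_⟩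
        · intro h; subst h; exact absurd (hij.trans hkm) (lt_irrefl _)
        · intro h; subst h; exact absurd hkm (lt_irrefl _)
      · exact ⟨k, Or.inl rfl, hki, hkj⟩
  classical
  set z : Fin N → ℂ := fun x => if x = t then 1 else 0 with hz
  have h0 : eval z (X k - X m : MvPolynomial (Fin N) ℂ) = eval z (X i - X j) * eval z c := by
    rw [← map_mul, ← hc]
  have hij0 : eval z (X i - X j : MvPolynomial (Fin N) ℂ) = 0 := by
    simp [hz, Ne.symm hti, Ne.symm htj]
  rw [hij0, zero_mul] at h0
  rcases ht with rfl | rfl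
  · simp [hz, (ne_of_lt hkm).symm] at h0
  · simp [hz, ne_of_lt hkm] at h0

private lemma prodPowDvd {α : Type*} [CommMonoidWithZero α] [IsCancelMulZero α] {ι : Type*}
    (s : Finset ι) (f : ι → α) (ℓ : ℕ)
    (hp : ∀ i ∈ s, Prime (f i))
    (hnd : ∀ i ∈ s, ∀ j ∈ s, i ≠ j → ¬ f i ∣ f j)
    {n : α} (hd : ∀ i ∈ s, f i ^ ℓ ∣ n) :
    (∏ i ∈ s, f i ^ ℓ) ∣ n := by
  classical
  induction s using Finset.cons_induction generalizing n with
  | empty => simpa using one_dvd n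
  | cons a t ha ih =>
    obtain ⟨m, rfl⟩ := hd a (mem_cons_self a t)
    rw [prod_cons]
    refine mul_dvd_mul_left _ (ih (fun i hi => hp i (mem_cons_of_mem hi))
      (fun i hi j hj hij => hnd _ (mem_cons_of_mem hi) _ (mem_cons_of_mem hj) hij)
      (fun i hi => ?_))
    refine (hp i (mem_cons_of_mem hi)).pow_dvd_of_dvd_mul_left ℓ ?_
      (hd i (mem_cons_of_mem hi))
    intro hdvd
    exact hnd i (mem_cons_of_mem hi) a (mem_cons_self a t)
      (by rintro rfl; exact ha hi)
      ((hp i (mem_cons_of_mem hi)).dvd_of_dvd_pow hdvd)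

private lemma prodPairsEq {N : ℕ} {M : Type*} [CommMonoid M] (f : Fin N → Fin N → M) :
    ∏ p ∈ Finset.univ.filter (fun p : Fin N × Fin N => p.1 < p.2), f p.1 p.2
      = ∏ i : Fin N, ∏ j ∈ Ioi i, f i j := by
  rw [show (∏ i : Fin N, ∏ j ∈ Ioi i, f i j)
      = ∏ x ∈ Finset.univ.sigma (fun i => Ioi i), f x.1 x.2 from
    Finset.prod_sigma' _ _ _]
  refine Finset.prod_bij' (fun p _ => ⟨p.1, p.2⟩) (fun x _ => (x.1, x.2)) ?_ ?_ ?_ ?_ ?_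
  · intro a ha
    simp only [mem_filter] at ha
    simp [mem_sigma, mem_Ioi, ha.2]
  · intro b hb
    simp only [mem_sigma, mem_Ioi] at hb
    simp [hb.2]
  · intro a _; rfl
  · intro b _; rfl
  · intro a _; rfl

private lemma renameVdm {N : ℕ} (σ : Equiv.Perm (Fin N)) :
    rename σ (∏ p ∈ Finset.univ.filter (fun p : Fin N × Fin N => p.1 < p.2),
        (X p.1 - X p.2 : MvPolynomial (Fin N) ℂ))
      = (Equiv.Perm.sign σ : ℤ) • ∏ p ∈ Finset.univ.filter (fun p : Fin N × Fin N => p.1 < p.2),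
        (X p.1 - X p.2 : MvPolynomial (Fin N) ℂ) := by
  have key : rename σ (Matrix.det (Matrix.vandermonde (fun i => (X i : MvPolynomial (Fin N) ℂ))))
      = (Equiv.Perm.sign σ : ℤ) •
        Matrix.det (Matrix.vandermonde (fun i => (X i : MvPolynomial (Fin N) ℂ))) := by
    rw [AlgHom.map_det (rename σ), AlgHom.mapMatrix_apply]
    have hsub : (Matrix.vandermonde (fun i => (X i : MvPolynomial (Fin N) ℂ))).map (rename σ)
        = (Matrix.vandermonde fun i => (X i : MvPolynomial (Fin N) ℂ)).submatrix σ id := by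
      ext a b
      simp [Matrix.vandermonde]
    rw [hsub, Matrix.det_permute, zsmul_eq_mul]
  have hW : ∏ p ∈ Finset.univ.filter (fun p : Fin N × Fin N => p.1 < p.2),
      (X p.2 - X p.1 : MvPolynomial (Fin N) ℂ)
      = Matrix.det (Matrix.vandermonde (fun i => (X i : MvPolynomial (Fin N) ℂ))) := by
    rw [Matrix.det_vandermonde]
    exact prodPairsEq (fun i j => X j - X i)
  have hVW : ∏ p ∈ Finset.univ.filter (fun p : Fin N × Fin N => p.1 < p.2),
      (X p.1 - X p.2 : MvPolynomial (Fin N) ℂ)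
      = (-1) ^ (Finset.univ.filter (fun p : Fin N × Fin N => p.1 < p.2)).card *
        ∏ p ∈ Finset.univ.filter (fun p : Fin N × Fin N => p.1 < p.2),
          (X p.2 - X p.1 : MvPolynomial (Fin N) ℂ) := by
    rw [← prod_const, ← prod_mul_distrib]
    exact prod_congr rfl (fun p _ => by ring)
  rw [hVW, hW, map_mul, map_pow, map_neg, map_one, key, mul_smul_comm]

/-- For odd ℓ, every antisymmetric polynomial vanishing to order at least ℓ on each
diagonal {z_i = z_j} is divisible by ∏_{i<j}(z_i − z_j)^ℓ with symmetric quotient. -/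
theorem antisymmetric_divisible_by_laughlin_factor
    (N : ℕ) (hN : 2 ≤ N) (ℓ : ℕ) (hℓpos : 0 < ℓ) (hℓ : Odd ℓ)
    (P : MvPolynomial (Fin N) ℂ)
    (hP : ∀ σ : Equiv.Perm (Fin N),
      MvPolynomial.rename σ P = (Equiv.Perm.sign σ : ℤ) • P)
    (hvanish : ∀ i j : Fin N, i ≠ j → (X i - X j) ^ ℓ ∣ P) :
    ∃ Q : MvPolynomial (Fin N) ℂ,
      (∀ σ : Equiv.Perm (Fin N), MvPolynomial.rename σ Q = Q) ∧
      P = Q * ∏ p ∈ Finset.univ.filter (fun p : Fin N × Fin N => p.1 < p.2),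
              (X p.1 - X p.2) ^ ℓ := by
  obtain ⟨n, rfl⟩ : ∃ n, N = n + 1 := ⟨N - 1, by omega⟩
  classical
  have hmem : ∀ p ∈ Finset.univ.filter (fun p : Fin (n+1) × Fin (n+1) => p.1 < p.2),
      p.1 < p.2 := fun p hp => (mem_filter.mp hp).2
  have hdvd : (∏ p ∈ Finset.univ.filter (fun p : Fin (n+1) × Fin (n+1) => p.1 < p.2),
      (X p.1 - X p.2 : MvPolynomial (Fin (n+1)) ℂ) ^ ℓ) ∣ P := by
    refine prodPowDvd _ _ ℓ (fun p hp => primeXsubX (ne_of_lt (hmem p hp))) ?_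
      (fun p hp => hvanish _ _ (ne_of_lt (hmem p hp)))
    intro p hp q hq hpq
    refine notdvdXsubX (hmem p hp) (hmem q hq) ?_
    simpa [Prod.ext_iff] using hpq
  obtain ⟨Q, hQ⟩ := hdvd
  refine ⟨Q, ?_, by rw [hQ, mul_comm]⟩
  intro σ
  have hD0 : (∏ p ∈ Finset.univ.filter (fun p : Fin (n+1) × Fin (n+1) => p.1 < p.2),
      (X p.1 - X p.2 : MvPolynomial (Fin (n+1)) ℂ) ^ ℓ) ≠ 0 :=
    prod_ne_zero_iff.mpr
      (fun p hp => pow_ne_zero _ (primeXsubX (ne_of_lt (hmem p hp))).ne_zero)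
  have hren : rename σ (∏ p ∈ Finset.univ.filter (fun p : Fin (n+1) × Fin (n+1) => p.1 < p.2),
      (X p.1 - X p.2 : MvPolynomial (Fin (n+1)) ℂ) ^ ℓ)
      = (Equiv.Perm.sign σ : ℤ) •
        ∏ p ∈ Finset.univ.filter (fun p : Fin (n+1) × Fin (n+1) => p.1 < p.2),
          (X p.1 - X p.2 : MvPolynomial (Fin (n+1)) ℂ) ^ ℓ := by
    rw [prod_pow, map_pow, renameVdm σ]
    rcases Int.units_eq_one_or (Equiv.Perm.sign σ) with h | h <;> rw [h]
    · simp
    · simp only [Units.val_neg, Units.val_one, neg_smul, one_smul]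
      rw [hℓ.neg_pow]
  have hkey := congrArg (rename σ) hQ
  rw [map_mul, hren, hP σ, hQ] at hkey
  rcases Int.units_eq_one_or (Equiv.Perm.sign σ) with h | h <;> rw [h] at hkey <;>
    simp only [Units.val_neg, Units.val_one, one_smul, neg_smul] at hkey
  · exact (mul_left_cancel₀ hD0 hkey).symm
  · rw [neg_mul, neg_inj] at hkey
    exact (mul_left_cancel₀ hD0 hkey).symm
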